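/- Let 𝔤 be an AE Lie algebra, R ≥ 1, p a continuous seminorm with asymptotic estimate q, and z ∈ ℂ. Suppose the operators Cₙ of the Gutt star product satisfy p_R(Cₙ(x,y)) ≤ (n!^{1−R}/(2·8ⁿ)) (16q)_R(x)(16q)_R(y). Then the Gutt star product x ⋆_z y = Σₙ zⁿ Cₙ(x,y) satisfies p_R(x ⋆_z y) ≤ (cq)_R(x)(cq)_R(y) with c = 16(|z|+1), for all x of degree ≤ k and y of degree ≤ ℓ (noting Cₙ(x,y) = 0 for n ≥ k+ℓ). -/

import Mathlib

open Finset

variable {W : ℕ → Type*} [∀ n, AddCommGroup (W n)] [∀ n, Module ℂ (W n)]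
  [∀ n (w : W n), Decidable (w ≠ 0)]

/-- The `T_R`-seminorm `p_R = Σₙ (n!)^R pⁿ` on the graded symmetric algebra, modelled on
`Π₀ n, W n` with `ν n` representing the weighted component seminorm `(n!)^R pⁿ`. -/
noncomputable def gradedSeminorm (ν : ∀ n, Seminorm ℂ (W n)) (x : Π₀ n, W n) : ℝ :=
  ∑ n ∈ x.support, ν n (x n)

/-- The scaled `T_R`-seminorm `(c·q)_R`, with `μ n` representing `(n!)^R qⁿ` and the
scaling `cⁿ` explicit. -/
noncomputable def scaledSeminorm (μ : ∀ n, Seminorm ℂ (W n)) (c : ℝ) (x : Π₀ n, W n) : ℝ :=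
  ∑ n ∈ x.support, c ^ n * μ n (x n)


lemma gradedSeminorm_eq_sum (ν : ∀ n, Seminorm ℂ (W n)) (x : Π₀ n, W n) (s : Finset ℕ)
    (h : x.support ⊆ s) : gradedSeminorm ν x = ∑ n ∈ s, ν n (x n) :=
  Finset.sum_subset h (fun n _ hn => by
    rw [DFinsupp.notMem_support_iff.mp hn]; simp)

lemma gradedSeminorm_nonneg (ν : ∀ n, Seminorm ℂ (W n)) (x : Π₀ n, W n) :
    0 ≤ gradedSeminorm ν x :=
  Finset.sum_nonneg fun n _ => apply_nonneg _ _

lemma gradedSeminorm_zero (ν : ∀ n, Seminorm ℂ (W n)) :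
    gradedSeminorm ν (0 : Π₀ n, W n) = 0 := by
  simp [gradedSeminorm]

lemma gradedSeminorm_add_le (ν : ∀ n, Seminorm ℂ (W n)) (a b : Π₀ n, W n) :
    gradedSeminorm ν (a + b) ≤ gradedSeminorm ν a + gradedSeminorm ν b := by
  rw [gradedSeminorm_eq_sum ν (a + b) (a.support ∪ b.support) (DFinsupp.support_add),
      gradedSeminorm_eq_sum ν a (a.support ∪ b.support) Finset.subset_union_left,
      gradedSeminorm_eq_sum ν b (a.support ∪ b.support) Finset.subset_union_right,
      ← Finset.sum_add_distrib]
  refine Finset.sum_le_sum fun n _ => ?_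
  rw [DFinsupp.add_apply]
  exact map_add_le_add (ν n) (a n) (b n)

lemma gradedSeminorm_sum_le (ν : ∀ n, Seminorm ℂ (W n)) {α : Type*} (s : Finset α)
    (f : α → Π₀ n, W n) :
    gradedSeminorm ν (∑ i ∈ s, f i) ≤ ∑ i ∈ s, gradedSeminorm ν (f i) := by
  classical
  induction s using Finset.induction with
  | empty => simp [gradedSeminorm_zero]
  | insert _ _ h ih =>
    rw [Finset.sum_insert h, Finset.sum_insert h]
    exact le_trans (gradedSeminorm_add_le _ _ _) (by linarith)

lemma gradedSeminorm_smul_le (ν : ∀ n, Seminorm ℂ (W n)) (c : ℂ) (x : Π₀ n, W n) :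
    gradedSeminorm ν (c • x) ≤ ‖c‖ * gradedSeminorm ν x := by
  rw [gradedSeminorm_eq_sum ν (c • x) x.support (DFinsupp.support_smul c x),
      gradedSeminorm, Finset.mul_sum]
  refine Finset.sum_le_sum fun n _ => ?_
  rw [DFinsupp.smul_apply]
  exact (map_smul_eq_mul (ν n) c (x n)).le

lemma scaledSeminorm_single (μ : ∀ n, Seminorm ℂ (W n)) (c : ℝ) (i : ℕ) (w : W i)
    (hw : w ≠ 0) : scaledSeminorm μ c (DFinsupp.single i w) = c ^ i * μ i w := by
  rw [scaledSeminorm, DFinsupp.support_single_ne_zero hw, Finset.sum_singleton,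
      DFinsupp.single_eq_same]

lemma single_support_sub (i : ℕ) (w : W i) :
    ((DFinsupp.single i w).support : Set ℕ) ⊆ Set.Iio (i + 1) := by
  intro m hm
  have hm' : m ∈ (DFinsupp.single i w).support := hm
  have := DFinsupp.support_single_subset hm'
  simp only [Finset.mem_singleton] at this
  simp [Set.mem_Iio, this]

/-- Continuity of the Gutt star product: if `R ≥ 1` and the bilinear operators `Cₙ`
satisfy `p_R(Cₙ(u,v)) ≤ (n!^{1−R}/(2·8ⁿ)) (16q)_R(u) (16q)_R(v)` and vanish for
`n ≥ deg u + deg v`, then for `x` of degree `≤ k` and `y` of degree `≤ ℓ` the star product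
`x ⋆_z y = Σ_{n<k+ℓ} zⁿ Cₙ(x,y)` satisfies `p_R(x ⋆_z y) ≤ (cq)_R(x)(cq)_R(y)` with
`c = 16(|z|+1)`. -/
theorem stmt11 (ν μ : ∀ n, Seminorm ℂ (W n)) (R : ℝ) (hR : 1 ≤ R) (z : ℂ)
    (C : ℕ → (Π₀ n, W n) →ₗ[ℂ] (Π₀ n, W n) →ₗ[ℂ] (Π₀ n, W n))
    (hC : ∀ (n : ℕ) (u v : Π₀ n, W n),
      gradedSeminorm ν (C n u v) ≤
        (n.factorial : ℝ) ^ ((1 : ℝ) - R) / (2 * 8 ^ n) *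
          scaledSeminorm μ 16 u * scaledSeminorm μ 16 v)
    (hvan : ∀ (u v : Π₀ n, W n) (a b : ℕ),
      (u.support : Set ℕ) ⊆ Set.Iio (a + 1) → (v.support : Set ℕ) ⊆ Set.Iio (b + 1) →
        ∀ m : ℕ, a + b ≤ m → C m u v = 0)
    (k ℓ : ℕ) (x y : Π₀ n, W n)
    (hx : (x.support : Set ℕ) ⊆ Set.Iio (k + 1))
    (hy : (y.support : Set ℕ) ⊆ Set.Iio (ℓ + 1)) :
    gradedSeminorm ν (∑ n ∈ Finset.range (k + ℓ), z ^ n • C n x y) ≤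
      scaledSeminorm μ (16 * (‖z‖ + 1)) x *
        scaledSeminorm μ (16 * (‖z‖ + 1)) y := by
  classical
  set t : ℝ := ‖z‖ + 1 with htdef
  have habs : (0:ℝ) ≤ ‖z‖ := norm_nonneg z
  have ht1 : (1:ℝ) ≤ t := by simp only [htdef]; linarith
  have hzt : ‖z‖ ≤ t := by simp only [htdef]; linarith
  -- decomposition of x and y into single components
  have hxd : x = ∑ i ∈ x.support, DFinsupp.single i (x i) := by
    conv_lhs => rw [← DFinsupp.sum_single (f := x)]
    rfl
  have hyd : y = ∑ j ∈ y.support, DFinsupp.single j (y j) := by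
    conv_lhs => rw [← DFinsupp.sum_single (f := y)]
    rfl
  have hdec : ∀ n, C n x y = ∑ i ∈ x.support, ∑ j ∈ y.support,
      C n (DFinsupp.single i (x i)) (DFinsupp.single j (y j)) := by
    intro n
    conv_lhs => rw [hxd, hyd]
    simp only [map_sum, LinearMap.coe_sum, Finset.sum_apply]
    exact Finset.sum_comm
  -- key per-component estimate
  have key : ∀ i ∈ x.support, ∀ j ∈ y.support,
      (∑ n ∈ Finset.range (k + ℓ), ‖z ^ n‖ *
        gradedSeminorm ν (C n (DFinsupp.single i (x i)) (DFinsupp.single j (y j)))) ≤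
      ((16 * t) ^ i * μ i (x i)) * ((16 * t) ^ j * μ j (y j)) := by
    intro i hi j hj
    have hxi : x i ≠ 0 := DFinsupp.mem_support_iff.mp hi
    have hyj : y j ≠ 0 := DFinsupp.mem_support_iff.mp hj
    set u : ℝ := (16:ℝ) ^ i * μ i (x i) with hu
    set v : ℝ := (16:ℝ) ^ j * μ j (y j) with hv
    have hu0 : 0 ≤ u := by positivity
    have hv0 : 0 ≤ v := by positivity
    have hterm : ∀ n ∈ Finset.range (k + ℓ), ‖z ^ n‖ *
        gradedSeminorm ν (C n (DFinsupp.single i (x i)) (DFinsupp.single j (y j))) ≤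
        t ^ (i + j) * ((1/2) * (1/2) ^ n) * (u * v) := by
      intro n _
      by_cases hn : i + j ≤ n
      · rw [hvan _ _ i j (single_support_sub i (x i)) (single_support_sub j (y j)) n hn,
          gradedSeminorm_zero, mul_zero]
        positivity
      · push_neg at hn
        have hB : gradedSeminorm ν (C n (DFinsupp.single i (x i)) (DFinsupp.single j (y j))) ≤
            (n.factorial : ℝ) ^ ((1:ℝ) - R) / (2 * 8 ^ n) * u * v := by
          have := hC n (DFinsupp.single i (x i)) (DFinsupp.single j (y j))
          rwa [scaledSeminorm_single μ 16 i (x i) hxi,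
            scaledSeminorm_single μ 16 j (y j) hyj] at this
        have hD : (n.factorial : ℝ) ^ ((1:ℝ) - R) / (2 * 8 ^ n) ≤ (1/2) * (1/2) ^ n := by
          have h1 : (n.factorial : ℝ) ^ ((1:ℝ) - R) ≤ 1 :=
            Real.rpow_le_one_of_one_le_of_nonpos
              (Nat.one_le_cast.mpr n.factorial_pos) (by linarith)
          calc (n.factorial : ℝ) ^ ((1:ℝ) - R) / (2 * 8 ^ n)
              ≤ 1 / (2 * 8 ^ n) := by gcongr
            _ = (1/2) * (1/8) ^ n := by
                rw [one_div_pow]; field_simp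
            _ ≤ (1/2) * (1/2) ^ n := by gcongr <;> norm_num
        have hzn : ‖z ^ n‖ ≤ t ^ (i + j) := by
          rw [norm_pow]
          calc ‖z‖ ^ n ≤ t ^ n := pow_le_pow_left₀ habs hzt n
            _ ≤ t ^ (i + j) := pow_le_pow_right₀ ht1 (le_of_lt hn)
        calc ‖z ^ n‖ * gradedSeminorm ν (C n (DFinsupp.single i (x i)) (DFinsupp.single j (y j)))
            ≤ t ^ (i + j) * ((n.factorial : ℝ) ^ ((1:ℝ) - R) / (2 * 8 ^ n) * u * v) := by
              apply mul_le_mul hzn ?_ (gradedSeminorm_nonneg _ _) (by positivity)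
              exact hB
          _ ≤ t ^ (i + j) * ((1/2) * (1/2) ^ n * (u * v)) := by
              rw [mul_assoc ((n.factorial : ℝ) ^ ((1:ℝ) - R) / (2 * 8 ^ n))]
              exact mul_le_mul_of_nonneg_left
                (mul_le_mul_of_nonneg_right hD (by positivity)) (by positivity)
          _ = t ^ (i + j) * ((1/2) * (1/2) ^ n) * (u * v) := by ring
    calc (∑ n ∈ Finset.range (k + ℓ), ‖z ^ n‖ *
          gradedSeminorm ν (C n (DFinsupp.single i (x i)) (DFinsupp.single j (y j))))
        ≤ ∑ n ∈ Finset.range (k + ℓ), t ^ (i + j) * ((1/2) * (1/2) ^ n) * (u * v) :=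
          Finset.sum_le_sum hterm
      _ = ∑ n ∈ Finset.range (k + ℓ), (t ^ (i + j) * (1/2) * (u * v)) * ((1:ℝ)/2) ^ n :=
          Finset.sum_congr rfl fun n _ => by ring
      _ = t ^ (i + j) * (1/2) * (u * v) * ∑ n ∈ Finset.range (k + ℓ), ((1:ℝ)/2) ^ n := by
          rw [← Finset.mul_sum]
      _ ≤ t ^ (i + j) * (1/2) * (u * v) * 2 := by
          apply mul_le_mul_of_nonneg_left (sum_geometric_two_le _) (by positivity)
      _ = ((16 * t) ^ i * μ i (x i)) * ((16 * t) ^ j * μ j (y j)) := by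
          rw [hu, hv, mul_pow, mul_pow, pow_add]; ring
  -- main chain
  calc gradedSeminorm ν (∑ n ∈ Finset.range (k + ℓ), z ^ n • C n x y)
      ≤ ∑ n ∈ Finset.range (k + ℓ), gradedSeminorm ν (z ^ n • C n x y) :=
        gradedSeminorm_sum_le _ _ _
    _ ≤ ∑ n ∈ Finset.range (k + ℓ), ‖z ^ n‖ * gradedSeminorm ν (C n x y) :=
        Finset.sum_le_sum fun n _ => gradedSeminorm_smul_le _ _ _
    _ ≤ ∑ n ∈ Finset.range (k + ℓ), ∑ i ∈ x.support, ∑ j ∈ y.support, ‖z ^ n‖ *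
          gradedSeminorm ν (C n (DFinsupp.single i (x i)) (DFinsupp.single j (y j))) := by
        refine Finset.sum_le_sum fun n _ => ?_
        rw [hdec n]
        calc ‖z ^ n‖ * gradedSeminorm ν (∑ i ∈ x.support, ∑ j ∈ y.support,
              C n (DFinsupp.single i (x i)) (DFinsupp.single j (y j)))
            ≤ ‖z ^ n‖ * ∑ i ∈ x.support, ∑ j ∈ y.support,
              gradedSeminorm ν (C n (DFinsupp.single i (x i)) (DFinsupp.single j (y j))) :=
              mul_le_mul_of_nonneg_left
                (le_trans (gradedSeminorm_sum_le _ _ _)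
                  (Finset.sum_le_sum fun i _ => gradedSeminorm_sum_le _ _ _))
                (norm_nonneg _)
          _ = ∑ i ∈ x.support, ∑ j ∈ y.support, ‖z ^ n‖ *
              gradedSeminorm ν (C n (DFinsupp.single i (x i)) (DFinsupp.single j (y j))) := by
              simp_rw [Finset.mul_sum]
    _ = ∑ i ∈ x.support, ∑ j ∈ y.support, ∑ n ∈ Finset.range (k + ℓ), ‖z ^ n‖ *
          gradedSeminorm ν (C n (DFinsupp.single i (x i)) (DFinsupp.single j (y j))) := by
        rw [Finset.sum_comm]
        exact Finset.sum_congr rfl fun i _ => Finset.sum_comm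
    _ ≤ ∑ i ∈ x.support, ∑ j ∈ y.support,
          ((16 * t) ^ i * μ i (x i)) * ((16 * t) ^ j * μ j (y j)) :=
        Finset.sum_le_sum fun i hi => Finset.sum_le_sum fun j hj => key i hi j hj
    _ = scaledSeminorm μ (16 * t) x * scaledSeminorm μ (16 * t) y := by
        rw [scaledSeminorm, scaledSeminorm, Finset.sum_mul_sum]
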